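/- Let V be a finite-dimensional real inner product space, let a : V × V → ℝ be a symmetric bilinear form, let ℓ : V → ℝ be a linear functional, and let U ⊆ ℝ be an open set such that for every λ ∈ U the problem a(u,φ) + λ⟨u,φ⟩ = ℓ(φ) for all φ ∈ V has a unique solution u_λ ∈ V. Then the function λ ↦ ℓ(u_λ) is differentiable on U, and its derivative at each λ ∈ U equals -⟨u_λ, u_λ⟩. -/

import Mathlib

open scoped RealInnerProductSpace

/-- Derivative of the Galerkin transfer function: if for every `λ` in the open
set `U` the variational problem `a(u,φ) + λ⟨u,φ⟩ = ℓ(φ)` (for all `φ`) has the unique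
solution `u λ`, then `λ ↦ ℓ(u_λ)` is differentiable on `U` with derivative `-⟨u_λ, u_λ⟩`. -/
theorem galerkin_transfer_function_derivative
    {V : Type*} [NormedAddCommGroup V] [InnerProductSpace ℝ V] [FiniteDimensional ℝ V]
    (a : V →ₗ[ℝ] V →ₗ[ℝ] ℝ) (hsym : ∀ x y : V, a x y = a y x)
    (l : V →ₗ[ℝ] ℝ) (U : Set ℝ) (hU : IsOpen U)
    (u : ℝ → V)
    (hsol : ∀ lam ∈ U, ∀ φ : V, a (u lam) φ + lam * ⟪u lam, φ⟫ = l φ)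
    (huniq : ∀ lam ∈ U, ∀ v : V, (∀ φ : V, a v φ + lam * ⟪v, φ⟫ = l φ) → v = u lam) :
    ∀ lam ∈ U, HasDerivAt (fun t => l (u t)) (-⟪u lam, u lam⟫) lam := by
  classical
  intro lam hlam
  -- Riesz representative of `l`
  set w : V := (InnerProductSpace.toDual ℝ V).symm (LinearMap.toContinuousLinearMap l) with hw
  have hwl : ∀ φ : V, ⟪w, φ⟫ = l φ := by
    intro φ; simp [hw, InnerProductSpace.toDual_symm_apply]
  -- linear map representing `a`
  have Tmk : ∀ x : V, ∃ y : V, ∀ z : V, ⟪y, z⟫ = a x z := fun x =>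
    ⟨(InnerProductSpace.toDual ℝ V).symm (LinearMap.toContinuousLinearMap (a x)),
      fun z => by simp [InnerProductSpace.toDual_symm_apply]⟩
  choose T hT using Tmk
  have Tlin : IsLinearMap ℝ T := by
    constructor
    · intro x y
      apply ext_inner_right ℝ
      intro z; simp [hT, inner_add_left]
    · intro c x
      apply ext_inner_right ℝ
      intro z; simp [hT, inner_smul_left]
  set Tc : V →L[ℝ] V := LinearMap.toContinuousLinearMap Tlin.mk' with hTc
  set B : ℝ → (V →L[ℝ] V) := fun t => Tc + t • (1 : V →L[ℝ] V) with hB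
  have hBapp : ∀ (t : ℝ) (x y : V), ⟪B t x, y⟫ = a x y + t * ⟪x, y⟫ := by
    intro t x y
    simp [hB, hTc, inner_add_left, inner_smul_left, hT, IsLinearMap.mk'_apply]
  -- for each t ∈ U, B t (u t) = w and B t is bijective
  have hBu : ∀ t ∈ U, B t (u t) = w := by
    intro t ht
    apply ext_inner_right ℝ
    intro z
    rw [hBapp, hwl, hsol t ht]
  have hBbij : ∀ t ∈ U, Function.Bijective (B t) := by
    intro t ht
    have hinj : Function.Injective (B t) := by
      intro x y hxy
      have h : x - y + u t = u t := by
        apply huniq t ht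
        intro φ
        have h1 : ⟪B t (x - y + u t), φ⟫ = a (x - y + u t) φ + t * ⟪x - y + u t, φ⟫ := hBapp ..
        have h2 : B t (x - y + u t) = w := by
          rw [map_add, map_sub, hxy, sub_self, zero_add, hBu t ht]
        rw [h2, hwl] at h1
        linarith [h1]
      have hx : x - y = 0 := by rwa [add_eq_right] at h
      exact sub_eq_zero.mp hx
    exact ⟨hinj, (LinearMap.injective_iff_surjective (f := (B t : V →ₗ[ℝ] V))).mp hinj⟩
  -- u t = Ring.inverse (B t) w on U
  have hUnit : ∀ t ∈ U, IsUnit (B t) := fun t ht =>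
    ContinuousLinearMap.isUnit_iff_bijective.mpr (hBbij t ht)
  have hu_eq : ∀ t ∈ U, u t = Ring.inverse (B t) w := by
    intro t ht
    rw [← hBu t ht]
    have : Ring.inverse (B t) (B t (u t)) = (Ring.inverse (B t) * B t) (u t) := rfl
    rw [this, Ring.inverse_mul_cancel _ (hUnit t ht)]
    rfl
  -- continuity of u at lam
  have hBcont : Continuous B := by
    apply continuous_const.add
    exact (continuous_id.smul continuous_const)
  have hg_cont : ContinuousAt (fun t => Ring.inverse (B t) w) lam := by
    have h1 : ContinuousAt Ring.inverse (B lam) :=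
      NormedRing.inverse_continuousAt (hUnit lam hlam).unit
    have h2 : ContinuousAt (fun t => Ring.inverse (B t)) lam :=
      h1.comp hBcont.continuousAt
    exact ((ContinuousLinearMap.apply ℝ V w).continuous.continuousAt).comp h2
  have hu_cont : ContinuousAt u lam := by
    apply hg_cont.congr
    filter_upwards [hU.mem_nhds hlam] with t ht
    exact (hu_eq t ht).symm
  -- slope characterization
  rw [hasDerivAt_iff_tendsto_slope]
  have hslope : ∀ᶠ t in nhdsWithin lam {lam}ᶜ,
      slope (fun t => l (u t)) lam t = -⟪u lam, u t⟫ := by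
    filter_upwards [eventually_mem_nhdsWithin,
      eventually_nhdsWithin_of_eventually_nhds (hU.eventually_mem hlam)] with t htne ht
    have htl : t ≠ lam := htne
    have e1 : l (u t) = a (u lam) (u t) + lam * ⟪u lam, u t⟫ := (hsol lam hlam (u t)).symm
    have e2 : l (u lam) = a (u t) (u lam) + t * ⟪u t, u lam⟫ := (hsol t ht (u lam)).symm
    have key : l (u t) - l (u lam) = (lam - t) * ⟪u lam, u t⟫ := by
      rw [e1, e2, hsym (u t) (u lam), real_inner_comm (u t) (u lam)]
      ring
    rw [slope_def_field, div_eq_iff (sub_ne_zero.mpr htl)]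
    rw [key]; ring
  have hc : ContinuousAt (fun t => -⟪u lam, u t⟫) lam :=
    (continuousAt_const.inner hu_cont).neg
  exact Filter.Tendsto.congr' (hslope.mono fun t h => h.symm)
    (hc.tendsto.mono_left nhdsWithin_le_nhds)
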